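/- arXiv:1301.5079 — 3 statements merged into one kernel-verified Lean document; each statement's English description precedes it below -/
import Mathlib

section
/- Let E and F be finite-dimensional complex vector spaces (with their canonical topologies), let (L_n) be a sequence of linear maps from E to F converging to a linear map L, and assume dim_ℂ ker(L_n) = dim_ℂ ker(L) for all n. Then for every v ∈ ker(L) there exists a sequence (v_n) with v_n ∈ ker(L_n) for all n and v_n → v. (This is the selection principle used in the paper's Lemma to produce homomorphisms ξ_n ∈ Hom(Z_n, T_k*⊕T_k) converging to the identity.) -/
open Filter

/-- if a sequence of linear maps `L n : E → F` between finite-dimensional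
complex vector spaces converges to `L₀` and all kernels have the same dimension as the
kernel of `L₀`, then every `v ∈ ker L₀` is the limit of a sequence `w n ∈ ker (L n)`. -/
theorem exists_kernel_sequence_tendsto
    {E F : Type*} [NormedAddCommGroup E] [NormedSpace ℂ E] [FiniteDimensional ℂ E]
    [NormedAddCommGroup F] [NormedSpace ℂ F] [FiniteDimensional ℂ F]
    (L : ℕ → E →L[ℂ] F) (L₀ : E →L[ℂ] F)
    (hL : Tendsto L atTop (nhds L₀))
    (hdim : ∀ n, Module.finrank ℂ (LinearMap.ker (L n : E →ₗ[ℂ] F)) =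
      Module.finrank ℂ (LinearMap.ker (L₀ : E →ₗ[ℂ] F)))
    (v : E) (hv : v ∈ LinearMap.ker (L₀ : E →ₗ[ℂ] F)) :
    ∃ w : ℕ → E, (∀ n, w n ∈ LinearMap.ker (L n : E →ₗ[ℂ] F)) ∧
      Tendsto w atTop (nhds v) := by
  classical
  obtain ⟨C, hC⟩ := Submodule.exists_isCompl (LinearMap.ker (L₀ : E →ₗ[ℂ] F))
  -- antilipschitz constant for L₀ on C
  have hT₀ker : LinearMap.ker ((L₀ : E →ₗ[ℂ] F).comp C.subtype) = ⊥ := by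
    rw [LinearMap.ker_eq_bot']
    intro c hc
    have hmem : (c : E) ∈ LinearMap.ker (L₀ : E →ₗ[ℂ] F) := hc
    have := Submodule.disjoint_def.mp hC.disjoint (c : E) hmem c.2
    exact Subtype.ext this
  obtain ⟨K, hK0, hKa⟩ := LinearMap.exists_antilipschitzWith _ hT₀ker
  have hKbound : ∀ c : C, ‖(c : E)‖ ≤ (K : ℝ) * ‖L₀ (c : E)‖ := by
    intro c
    have := hKa.le_mul_dist c 0
    simpa [dist_eq_norm] using this
  have hKpos : (0 : ℝ) < K := hK0
  -- eventually L n is close to L₀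
  have hev : ∀ᶠ n in atTop, ‖L n - L₀‖ ≤ 1 / (2 * K) := by
    have : ∀ᶠ n in atTop, dist (L n) L₀ < 1 / (2 * K) :=
      hL (Metric.ball_mem_nhds L₀ (by positivity))
    filter_upwards [this] with n hn
    rw [dist_eq_norm] at hn; linarith
  -- eventual lower bound for L n on C
  have hlow : ∀ᶠ n in atTop, ∀ c : C, ‖(c : E)‖ ≤ 2 * K * ‖L n (c : E)‖ := by
    filter_upwards [hev] with n hn c
    have h1 := hKbound c
    have h2 : ‖L₀ (c : E) - L n (c : E)‖ ≤ ‖L n - L₀‖ * ‖(c : E)‖ := by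
      have := (L n - L₀).le_opNorm (c : E)
      simpa [norm_sub_rev, ContinuousLinearMap.sub_apply] using this
    have h3 : ‖L₀ (c : E)‖ ≤ ‖L n (c : E)‖ + ‖L₀ (c : E) - L n (c : E)‖ := by
      have := norm_sub_norm_le (L₀ (c : E)) (L n (c : E))
      have := norm_add_le (L n (c : E)) (L₀ (c : E) - L n (c : E))
      calc ‖L₀ (c : E)‖ = ‖L n (c : E) + (L₀ (c : E) - L n (c : E))‖ := by
            congr 1; abel
        _ ≤ _ := norm_add_le _ _
    have h4 : ‖L n - L₀‖ * ‖(c : E)‖ ≤ (1 / (2*K)) * ‖(c : E)‖ :=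
      mul_le_mul_of_nonneg_right hn (norm_nonneg _)
    have hKne : (2 : ℝ) * K ≠ 0 := by positivity
    have : ‖(c : E)‖ ≤ K * ‖L n (c : E)‖ + K * ((1/(2*K)) * ‖(c : E)‖) := by nlinarith [norm_nonneg (c : E)]
    have hsimp : K * ((1/(2*K)) * ‖(c : E)‖) = ‖(c : E)‖ / 2 := by field_simp
    rw [hsimp] at this
    nlinarith
  -- on such n, exists c ∈ C with L n c = L n v
  have hexists : ∀ᶠ n in atTop, ∃ c, c ∈ C ∧ L n c = L n v := by
    filter_upwards [hlow] with n hn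
    -- L n injective on C ⇒ ker of restriction trivial
    have hker : LinearMap.ker (((L n) : E →ₗ[ℂ] F).comp C.subtype) = ⊥ := by
      rw [LinearMap.ker_eq_bot']
      intro c hc
      have hc' : L n (c : E) = 0 := hc
      have := hn c
      rw [hc'] at this
      simp at this
      exact Subtype.ext (by simpa [norm_le_zero_iff] using this)
    have hrange : LinearMap.range (((L n) : E →ₗ[ℂ] F).comp C.subtype)
        = C.map ((L n) : E →ₗ[ℂ] F) := by
      rw [LinearMap.range_comp, Submodule.range_subtype]
    have hfr : Module.finrank ℂ (C.map ((L n) : E →ₗ[ℂ] F)) = Module.finrank ℂ C := by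
      have := LinearMap.finrank_range_add_finrank_ker (((L n) : E →ₗ[ℂ] F).comp C.subtype)
      rw [hker, hrange] at this
      simpa using this
    have hCK : Module.finrank ℂ (LinearMap.ker (L₀ : E →ₗ[ℂ] F)) + Module.finrank ℂ C
        = Module.finrank ℂ E := Submodule.finrank_add_eq_of_isCompl hC
    have hrn : Module.finrank ℂ (LinearMap.range (L n : E →ₗ[ℂ] F))
        + Module.finrank ℂ (LinearMap.ker (L n : E →ₗ[ℂ] F)) = Module.finrank ℂ E :=
      LinearMap.finrank_range_add_finrank_ker ((L n) : E →ₗ[ℂ] F)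
    have hle : C.map ((L n) : E →ₗ[ℂ] F) ≤ LinearMap.range (L n : E →ₗ[ℂ] F) := by
      rintro x ⟨c, _, rfl⟩; exact ⟨c, rfl⟩
    have heq : C.map ((L n) : E →ₗ[ℂ] F) = LinearMap.range (L n : E →ₗ[ℂ] F) := by
      apply Submodule.eq_of_le_of_finrank_le hle
      rw [hfr]
      have hd := hdim n
      omega
    have hvmem : L n v ∈ C.map ((L n) : E →ₗ[ℂ] F) := heq ▸ ⟨v, rfl⟩
    obtain ⟨c, hcC, hcEq⟩ := hvmem
    exact ⟨c, hcC, hcEq⟩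
  set P : ℕ → Prop := fun n => ∃ c, c ∈ C ∧ L n c = L n v with hP
  set w : ℕ → E := fun n => if h : P n then v - h.choose else 0 with hw
  refine ⟨w, ?_, ?_⟩
  · intro n
    by_cases h : P n
    · simp only [hw, dif_pos h]
      obtain ⟨hcC, hcEq⟩ := h.choose_spec
      simp [LinearMap.mem_ker, map_sub, hcEq]
    · simp [hw, dif_neg h]
  · -- tendsto
    have hLv : Tendsto (fun n => ‖L n v - L₀ v‖) atTop (nhds 0) := by
      have h1 : Tendsto (fun n => (L n) v) atTop (nhds (L₀ v)) :=
        ((ContinuousLinearMap.apply ℂ F v).continuous.tendsto L₀).comp hL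
      simpa using (tendsto_iff_norm_sub_tendsto_zero.mp h1)
    have hLv0 : Tendsto (fun n => ‖L n v‖) atTop (nhds 0) := by
      have : L₀ v = 0 := hv
      simpa [this] using hLv
    have hbound : ∀ᶠ n in atTop, ‖w n - v‖ ≤ 2 * K * ‖L n v‖ := by
      filter_upwards [hlow, hexists] with n hn hx
      have hPn : P n := hx
      simp only [hw, dif_pos hPn]
      obtain ⟨hcC, hcEq⟩ := hPn.choose_spec
      have heqn : ‖v - hPn.choose - v‖ = ‖hPn.choose‖ := by
        have h' : v - hPn.choose - v = -(hPn.choose) := by abel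
        rw [h', norm_neg]
      rw [heqn]
      calc ‖hPn.choose‖ ≤ 2 * K * ‖L n hPn.choose‖ := hn ⟨hPn.choose, hcC⟩
        _ = 2 * K * ‖L n v‖ := by rw [hcEq]
    have h2K : Tendsto (fun n => 2 * (K : ℝ) * ‖L n v‖) atTop (nhds 0) := by
      simpa using hLv0.const_mul (2 * (K : ℝ))
    have : Tendsto (fun n => w n - v) atTop (nhds 0) :=
      squeeze_zero_norm' hbound h2K
    simpa using tendsto_sub_nhds_zero_iff.mp this
end

section
/- Suppose (Z^{(n)}) is a sequence in E_V converging to a point M ∈ E_V (both for the same family V), and suppose that for every n the representation Z^{(n)} is NOT isomorphic to M, i.e. no f ∈ Hom(Z^{(n)}, M) has all components f_i invertible. Then for all sufficiently large n one has the strict inequalities dim_ℂ Hom(Z^{(n)}, M) < dim_ℂ Hom(M, M) and dim_ℂ Hom(M, Z^{(n)}) < dim_ℂ Hom(M, M). -/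
open Filter Module Matrix

/-- The space of intertwiners `Hom(B, C)` between two representations (given in matrix
form) of a quiver with vertices `I`, arrows `Ω`, and source/target maps `s`, `t`,
both on the same family of vector spaces of dimensions `d`. -/
noncomputable def homSpace {I Ω : Type*} [Fintype I] [Fintype Ω] (s t : Ω → I) (d : I → ℕ)
    (B C : ∀ h : Ω, Matrix (Fin (d (t h))) (Fin (d (s h))) ℂ) :
    Submodule ℂ (∀ i : I, Matrix (Fin (d i)) (Fin (d i)) ℂ) where
  carrier := {f | ∀ h : Ω, f (t h) * B h = C h * f (s h)}
  add_mem' := by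
    intro a b ha hb h
    simp only [Pi.add_apply, Matrix.add_mul, Matrix.mul_add, ha h, hb h]
  zero_mem' := by
    intro h
    simp
  smul_mem' := by
    intro c f hf h
    simp only [Pi.smul_apply, Matrix.smul_mul, Matrix.mul_smul, hf h]

section AuxProofs

attribute [local instance] Matrix.linftyOpNormedAddCommGroup Matrix.linftyOpNormedSpace



section
variable {I Ω : Type*} [Fintype I] [Fintype Ω] (s t : Ω → I) (d : I → ℕ)

noncomputable def Phi (B C : ∀ h : Ω, Matrix (Fin (d (t h))) (Fin (d (s h))) ℂ) :
    (∀ i : I, Matrix (Fin (d i)) (Fin (d i)) ℂ) →ₗ[ℂ]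
      (∀ h : Ω, Matrix (Fin (d (t h))) (Fin (d (s h))) ℂ) where
  toFun f := fun h => f (t h) * B h - C h * f (s h)
  map_add' f g := by
    funext h
    simp only [Pi.add_apply, Matrix.add_mul, Matrix.mul_add]
    abel
  map_smul' c f := by
    funext h
    simp only [Pi.smul_apply, Matrix.smul_mul, Matrix.mul_smul, RingHom.id_apply, smul_sub]

lemma Phi_sub_bound (B C B' C' : ∀ h : Ω, Matrix (Fin (d (t h))) (Fin (d (s h))) ℂ)
    (f : ∀ i : I, Matrix (Fin (d i)) (Fin (d i)) ℂ) :
    ‖Phi s t d B C f - Phi s t d B' C' f‖ ≤ (‖B - B'‖ + ‖C - C'‖) * ‖f‖ := by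
  have hnn : 0 ≤ (‖B - B'‖ + ‖C - C'‖) * ‖f‖ := by positivity
  apply pi_norm_le_iff_of_nonneg hnn |>.mpr
  intro h
  have e1 : (Phi s t d B C f - Phi s t d B' C' f) h
      = f (t h) * (B h - B' h) - (C h - C' h) * f (s h) := by
    simp only [Pi.sub_apply, Phi, LinearMap.coe_mk, AddHom.coe_mk]
    simp [Matrix.mul_sub, Matrix.sub_mul]
    abel
  rw [e1]
  calc ‖f (t h) * (B h - B' h) - (C h - C' h) * f (s h)‖
      ≤ ‖f (t h) * (B h - B' h)‖ + ‖(C h - C' h) * f (s h)‖ := norm_sub_le _ _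
    _ ≤ ‖f (t h)‖ * ‖B h - B' h‖ + ‖C h - C' h‖ * ‖f (s h)‖ := by
        gcongr <;> exact Matrix.linfty_opNorm_mul _ _
    _ ≤ ‖f‖ * ‖B - B'‖ + ‖C - C'‖ * ‖f‖ := by
        gcongr
        · exact norm_le_pi_norm f (t h)
        · exact (norm_le_pi_norm (B - B') h).trans_eq (by rfl)
        · exact norm_le_pi_norm (C - C') h
        · exact norm_le_pi_norm f (s h)
    _ = (‖B - B'‖ + ‖C - C'‖) * ‖f‖ := by ring

lemma homSpace_eq_ker (B C : ∀ h : Ω, Matrix (Fin (d (t h))) (Fin (d (s h))) ℂ) :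
    homSpace s t d B C = LinearMap.ker (Phi s t d B C) := by
  ext f
  simp only [LinearMap.mem_ker, Phi, LinearMap.coe_mk, AddHom.coe_mk]
  constructor
  · intro hf; funext h; show _ - _ = (0 : Matrix _ _ ℂ); rw [sub_eq_zero]; exact hf h
  · intro hf h
    have := congrFun hf h
    rw [show (0 : ∀ h : Ω, Matrix (Fin (d (t h))) (Fin (d (s h))) ℂ) h = 0 from rfl,
      sub_eq_zero] at this
    exact this
end


set_option maxHeartbeats 1000000 in
lemma key_perturb {X Y : Type*} [NormedAddCommGroup X] [NormedSpace ℂ X]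
    [NormedAddCommGroup Y] [NormedSpace ℂ Y] [FiniteDimensional ℂ X]
    (A : X →ₗ[ℂ] Y) {ε : ℝ} (hε : 0 < ε) :
    ∃ δ > 0, ∀ T : X →ₗ[ℂ] Y, (∀ x, ‖T x - A x‖ ≤ δ * ‖x‖) →
      finrank ℂ (LinearMap.ker A) ≤ finrank ℂ (LinearMap.ker T) →
      ∀ v ∈ LinearMap.ker A, ‖v‖ ≤ 1 → ∃ f ∈ LinearMap.ker T, ‖f - v‖ < ε := by
  obtain ⟨K, hK⟩ := Submodule.exists_isCompl (LinearMap.ker A)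
  set S : K →ₗ[ℂ] Y := A.comp K.subtype with hS
  have hSker : LinearMap.ker S = ⊥ := by
    rw [LinearMap.ker_eq_bot']
    intro x hx
    have : (x : X) ∈ LinearMap.ker A ⊓ K := ⟨hx, x.2⟩
    rw [hK.inf_eq_bot] at this
    exact Subtype.ext this
  obtain ⟨κ, hκpos, hκ⟩ := S.exists_antilipschitzWith hSker
  set c : ℝ := (κ : ℝ) with hc
  have hcpos : (0:ℝ) < c := hκpos
  have hanti : ∀ w : K, ‖(w : X)‖ ≤ c * ‖A (w : X)‖ := by
    intro w
    have := hκ.le_mul_dist w 0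
    simpa [hS, dist_eq_norm] using this
  refine ⟨min (1/(2*c)) (ε/(4*c)), by positivity, fun T hT hrank v hv hv1 => ?_⟩
  set δ := min (1/(2*c)) (ε/(4*c)) with hδdef
  have hδpos : 0 < δ := by positivity
  have hδ1 : δ ≤ 1/(2*c) := min_le_left _ _
  have hδ2 : δ ≤ ε/(4*c) := min_le_right _ _
  have hTK : ∀ w : K, ‖(w : X)‖ ≤ 2*c * ‖T (w : X)‖ := by
    intro w
    have h1 : ‖(w : X)‖ ≤ c * ‖A (w : X)‖ := hanti w
    have h2 : ‖A (w:X)‖ ≤ ‖T (w:X)‖ + ‖A (w:X) - T (w:X)‖ :=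
      norm_le_norm_add_norm_sub' _ _
    have h3 : ‖A (w:X) - T (w:X)‖ ≤ δ * ‖(w:X)‖ := by
      rw [norm_sub_rev]; exact hT _
    have h4 : c * (δ * ‖(w:X)‖) ≤ (1/2) * ‖(w:X)‖ := by
      have : c * δ ≤ 1/2 := by
        calc c * δ ≤ c * (1/(2*c)) := by nlinarith
          _ = 1/2 := by field_simp; try ring
      nlinarith [norm_nonneg (w:X)]
    nlinarith [norm_nonneg (T (w:X))]
  have hdisj : Disjoint (LinearMap.ker T) K := by
    rw [Submodule.disjoint_def]
    intro x hx1 hx2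
    have := hTK ⟨x, hx2⟩
    simp only [LinearMap.mem_ker.mp hx1, norm_zero, mul_zero] at this
    exact norm_le_zero_iff.mp this
  have hsum : finrank ℂ (LinearMap.ker T ⊔ K : Submodule ℂ X)
      = finrank ℂ (LinearMap.ker T) + finrank ℂ K := by
    have := Submodule.finrank_sup_add_finrank_inf_eq (LinearMap.ker T) K
    rw [hdisj.eq_bot, finrank_bot, add_zero] at this
    exact this
  have hcodis : LinearMap.ker T ⊔ K = ⊤ := by
    apply Submodule.eq_top_of_finrank_eq
    apply le_antisymm (Submodule.finrank_le _)
    rw [hsum, ← Submodule.finrank_add_eq_of_isCompl hK]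
    omega
  obtain ⟨f, hf, w, hw, hfw⟩ := Submodule.mem_sup.mp
    (show v ∈ LinearMap.ker T ⊔ K by rw [hcodis]; trivial)
  refine ⟨f, hf, ?_⟩
  have hTv : T v = T w := by
    rw [← hfw, map_add, LinearMap.mem_ker.mp hf, zero_add]
  have hwb : ‖w‖ ≤ 2*c * ‖T v‖ := by
    have := hTK ⟨w, hw⟩
    rw [hTv]; exact this
  have hTv2 : ‖T v‖ ≤ δ := by
    have h5 := hT v
    rw [LinearMap.mem_ker.mp hv, sub_zero] at h5
    nlinarith
  have : ‖f - v‖ = ‖w‖ := by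
    rw [← hfw]; simp [norm_sub_rev]
  rw [this]
  calc ‖w‖ ≤ 2*c*δ := by nlinarith
    _ ≤ 2*c*(ε/(4*c)) := by nlinarith
    _ = ε/2 := by field_simp; try ring
    _ < ε := by linarith


lemma isUnit_one_sub_of_norm_lt {n : ℕ} (w : Matrix (Fin n) (Fin n) ℂ) (hw : ‖w‖ < 1) :
    IsUnit (1 - w) := by
  rw [Matrix.isUnit_iff_isUnit_det, isUnit_iff_ne_zero]
  intro hdet
  obtain ⟨v, hvne, hveq⟩ := Matrix.exists_mulVec_eq_zero_iff.mpr hdet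
  have hvw : v = w *ᵥ v := by
    rw [Matrix.sub_mulVec, Matrix.one_mulVec, sub_eq_zero] at hveq
    exact hveq
  have h1 : ‖v‖ ≤ ‖w‖ * ‖v‖ := by
    calc ‖v‖ = ‖w *ᵥ v‖ := by rw [← hvw]
      _ ≤ ‖w‖ * ‖v‖ := Matrix.linfty_opNorm_mulVec _ _
  have h2 : 0 < ‖v‖ := norm_pos_iff.mpr hvne
  nlinarith [norm_nonneg w]

set_option maxHeartbeats 1000000 in
lemma finrank_hom_lt_of_not_iso_aux
    {I Ω : Type*} [Fintype I] [Fintype Ω] (s t : Ω → I) (d : I → ℕ)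
    (Z : ℕ → ∀ h : Ω, Matrix (Fin (d (t h))) (Fin (d (s h))) ℂ)
    (M : ∀ h : Ω, Matrix (Fin (d (t h))) (Fin (d (s h))) ℂ)
    (hZ : Tendsto Z atTop (nhds M))
    (hniso : ∀ n, ¬ ∃ f ∈ homSpace s t d (Z n) M, ∀ i : I, IsUnit (f i)) :
    ∀ᶠ n in atTop,
      Module.finrank ℂ (homSpace s t d (Z n) M) <
        Module.finrank ℂ (homSpace s t d M M) ∧
      Module.finrank ℂ (homSpace s t d M (Z n)) <
        Module.finrank ℂ (homSpace s t d M M) := by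
  classical
  set A := Phi s t d M M with hAdef
  have h1mem : (1 : ∀ i : I, Matrix (Fin (d i)) (Fin (d i)) ℂ) ∈ LinearMap.ker A := by
    rw [LinearMap.mem_ker]
    funext h
    show (1 : ∀ i : I, Matrix (Fin (d i)) (Fin (d i)) ℂ) (t h) * M h
        - M h * (1 : ∀ i : I, Matrix (Fin (d i)) (Fin (d i)) ℂ) (s h) = 0
    simp
  have h1norm : ‖(1 : ∀ i : I, Matrix (Fin (d i)) (Fin (d i)) ℂ)‖ ≤ 1 := by
    apply pi_norm_le_iff_of_nonneg zero_le_one |>.mpr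
    intro i
    rw [Pi.one_apply]
    rcases Nat.eq_zero_or_pos (d i) with h0 | hpos
    · have hz : (1 : Matrix (Fin (d i)) (Fin (d i)) ℂ) = 0 := by
        apply Matrix.ext
        intro a b
        exact absurd a.isLt (by omega)
      rw [hz, norm_zero]
      exact zero_le_one
    · haveI : Nonempty (Fin (d i)) := ⟨⟨0, hpos⟩⟩
      exact le_of_eq norm_one
  obtain ⟨δ, hδpos, hkey⟩ := key_perturb A (ε := 1) one_pos
  have hZ' : Tendsto (fun n => ‖Z n - M‖) atTop (nhds 0) := by
    rw [← tendsto_sub_nhds_zero_iff] at hZ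
    exact tendsto_norm_zero.comp hZ
  have hsmall : ∀ᶠ n in atTop, ‖Z n - M‖ ≤ δ :=
    (hZ'.eventually_lt_const hδpos).mono fun n hn => le_of_lt hn
  filter_upwards [hsmall] with n hn
  have hunit : ∀ (f : ∀ i : I, Matrix (Fin (d i)) (Fin (d i)) ℂ),
      ‖f - 1‖ < 1 → ∀ i, IsUnit (f i) := by
    intro f hf i
    have hfi : f i = 1 - (1 - f) i := by simp
    rw [hfi]
    apply isUnit_one_sub_of_norm_lt
    calc ‖(1 - f) i‖ ≤ ‖(1:∀ i : I, Matrix (Fin (d i)) (Fin (d i)) ℂ) - f‖ :=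
          norm_le_pi_norm _ i
      _ = ‖f - 1‖ := norm_sub_rev _ _
      _ < 1 := hf
  constructor
  · rw [homSpace_eq_ker, homSpace_eq_ker]
    by_contra hge
    push_neg at hge
    set T := Phi s t d (Z n) M with hTdef
    have hTb : ∀ x, ‖T x - A x‖ ≤ δ * ‖x‖ := by
      intro x
      have hb := Phi_sub_bound s t d (Z n) M M M x
      rw [sub_self, norm_zero, add_zero] at hb
      calc ‖T x - A x‖ ≤ ‖Z n - M‖ * ‖x‖ := hb
        _ ≤ δ * ‖x‖ := by gcongr
    obtain ⟨f, hf, hfnear⟩ := hkey T hTb hge 1 h1mem h1norm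
    exact hniso n ⟨f, by rw [homSpace_eq_ker]; exact hf, hunit f hfnear⟩
  · rw [homSpace_eq_ker, homSpace_eq_ker]
    by_contra hge
    push_neg at hge
    set T := Phi s t d M (Z n) with hTdef
    have hTb : ∀ x, ‖T x - A x‖ ≤ δ * ‖x‖ := by
      intro x
      have hb := Phi_sub_bound s t d M (Z n) M M x
      rw [sub_self, norm_zero, zero_add] at hb
      calc ‖T x - A x‖ ≤ ‖Z n - M‖ * ‖x‖ := hb
        _ ≤ δ * ‖x‖ := by gcongr
    obtain ⟨f, hf, hfnear⟩ := hkey T hTb hge 1 h1mem h1norm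
    have hu : ∀ i, IsUnit (f i) := hunit f hfnear
    have hfhom : ∀ h : Ω, f (t h) * M h = Z n h * f (s h) := by
      have hm : f ∈ homSpace s t d M (Z n) := by rw [homSpace_eq_ker]; exact hf
      exact hm
    set g : ∀ i : I, Matrix (Fin (d i)) (Fin (d i)) ℂ :=
      fun i => (((hu i).unit⁻¹ : _) : Matrix (Fin (d i)) (Fin (d i)) ℂ) with hgdef
    have hgf : ∀ i, g i * f i = 1 := by
      intro i
      exact (hu i).val_inv_mul
    have hfg : ∀ i, f i * g i = 1 := by
      intro i
      exact (hu i).mul_val_inv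
    apply hniso n
    refine ⟨g, ?_, fun i => ((hu i).unit⁻¹).isUnit⟩
    show ∀ h : Ω, g (t h) * Z n h = M h * g (s h)
    intro h
    calc g (t h) * Z n h = g (t h) * Z n h * (f (s h) * g (s h)) := by
          rw [hfg, Matrix.mul_one]
      _ = g (t h) * (Z n h * f (s h)) * g (s h) := by
          simp only [Matrix.mul_assoc]
      _ = g (t h) * (f (t h) * M h) * g (s h) := by rw [hfhom h]
      _ = g (t h) * f (t h) * (M h * g (s h)) := by
          simp only [Matrix.mul_assoc]
      _ = M h * g (s h) := by rw [hgf, Matrix.one_mul]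

end AuxProofs

/-- if `Z n → M` and no `Z n` is isomorphic to `M`, then for all
sufficiently large `n` one has the strict inequalities
`dim Hom(Z n, M) < dim Hom(M, M)` and `dim Hom(M, Z n) < dim Hom(M, M)`. -/
theorem finrank_hom_lt_of_not_iso
    {I Ω : Type*} [Fintype I] [Fintype Ω] (s t : Ω → I) (d : I → ℕ)
    (Z : ℕ → ∀ h : Ω, Matrix (Fin (d (t h))) (Fin (d (s h))) ℂ)
    (M : ∀ h : Ω, Matrix (Fin (d (t h))) (Fin (d (s h))) ℂ)
    (hZ : Tendsto Z atTop (nhds M))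
    (hniso : ∀ n, ¬ ∃ f ∈ homSpace s t d (Z n) M, ∀ i : I, IsUnit (f i)) :
    ∀ᶠ n in atTop,
      Module.finrank ℂ (homSpace s t d (Z n) M) <
        Module.finrank ℂ (homSpace s t d M M) ∧
      Module.finrank ℂ (homSpace s t d M (Z n)) <
        Module.finrank ℂ (homSpace s t d M M) := by
  exact finrank_hom_lt_of_not_iso_aux s t d Z M hZ hniso
end

section
/- If (Z^{(n)}) is a sequence in E_V converging to M ∈ E_V and dim_ℂ Hom(Z^{(n)}, M) = dim_ℂ Hom(M, M) for all n, then for all sufficiently large n the representation Z^{(n)} is isomorphic to M, i.e. there exists f ∈ Hom(Z^{(n)}, M) with every component f_i invertible. (In the paper this is proved by choosing ξ_n ∈ Hom(Z^{(n)}, M) converging to the identity of Hom(M, M), so that ξ_n is invertible for large n.) -/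
open Filter

open Matrix Module


section Key

open scoped ComplexOrder

/-- If a square complex matrix kills no nonzero vector, its determinant is nonzero. -/
private lemma det_ne_zero_of_injective {q : ℕ} (G : Matrix (Fin q) (Fin q) ℂ)
    (hG : ∀ v, G *ᵥ v = 0 → v = 0) : G.det ≠ 0 := by
  intro hdet
  obtain ⟨v, hv, hGv⟩ := (Matrix.exists_mulVec_eq_zero_iff).2 hdet
  exact hv (hG v hGv)

private lemma injective_of_det_ne_zero {q : ℕ} (G : Matrix (Fin q) (Fin q) ℂ)
    (hdet : G.det ≠ 0) : ∀ v, G *ᵥ v = 0 → v = 0 := by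
  intro v hv
  by_contra hne
  exact hdet ((Matrix.exists_mulVec_eq_zero_iff).1 ⟨v, hne, hv⟩)

/-- Key analytic lemma: if `A n → A'` entrywise with kernels of constant dimension and
`A' *ᵥ x = 0`, then eventually there is `ξ ∈ U` (any neighborhood of `x`) with `A n *ᵥ ξ = 0`. -/
private lemma key {N K : ℕ} (A : ℕ → Matrix (Fin K) (Fin N) ℂ) (A' : Matrix (Fin K) (Fin N) ℂ)
    (hA : Tendsto A atTop (nhds A'))
    (hk : ∀ n, finrank ℂ (LinearMap.ker (A n).mulVecLin)
        = finrank ℂ (LinearMap.ker A'.mulVecLin))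
    (x : Fin N → ℂ) (hx : A' *ᵥ x = 0) {U : Set (Fin N → ℂ)} (hU : U ∈ nhds x) :
    ∀ᶠ n in atTop, ∃ ξ ∈ U, A n *ᵥ ξ = 0 := by
  obtain ⟨W, hW⟩ := Submodule.exists_isCompl (LinearMap.ker A'.mulVecLin)
  set r := finrank ℂ W with hr
  let b : Basis (Fin r) ℂ W := Module.finBasis ℂ W
  let P : Matrix (Fin N) (Fin r) ℂ := Matrix.of fun i j => (b j : Fin N → ℂ) i
  have hPc : ∀ c : Fin r → ℂ, P *ᵥ c = ((∑ j, c j • b j : W) : Fin N → ℂ) := by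
    intro c
    ext i
    simp [P, Matrix.mulVec, dotProduct, Finset.sum_apply, mul_comm]
  have hPmem : ∀ c, P *ᵥ c ∈ W := by
    intro c
    rw [hPc]
    exact (∑ j, c j • b j : W).2
  have hPinj : ∀ c, P *ᵥ c = 0 → c = 0 := by
    intro c h
    rw [hPc] at h
    have h0 : (∑ j, c j • b j : W) = 0 := Submodule.coe_eq_zero.mp h
    have := Fintype.linearIndependent_iff.mp b.linearIndependent c h0
    funext i; exact this i
  have hB'inj : ∀ c, (A' * P) *ᵥ c = 0 → c = 0 := by
    intro c h
    rw [← Matrix.mulVec_mulVec] at h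
    have h1 : P *ᵥ c ∈ LinearMap.ker A'.mulVecLin := h
    exact hPinj _ ((Submodule.disjoint_def.mp hW.disjoint) _ h1 (hPmem c))
  have hGdet : ((A' * P)ᴴ * (A' * P)).det ≠ 0 := by
    refine det_ne_zero_of_injective _ (fun v hv => hB'inj v ?_)
    have h1 : v ∈ LinearMap.ker ((A' * P)ᴴ * (A' * P)).mulVecLin := hv
    rw [Matrix.ker_mulVecLin_conjTranspose_mul_self] at h1
    exact h1
  -- the approximate solutions
  set c : ℕ → Fin r → ℂ := fun n =>
    ((A n * P)ᴴ * (A n * P))⁻¹ *ᵥ ((A n * P)ᴴ *ᵥ (A n *ᵥ x)) with hc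
  -- convergence
  have hGcont : Continuous fun X : Matrix (Fin K) (Fin N) ℂ => (X * P)ᴴ * (X * P) :=
    (continuous_id.matrix_mul continuous_const).matrix_conjTranspose.matrix_mul
      (continuous_id.matrix_mul continuous_const)
  have hGt : Tendsto (fun n => (A n * P)ᴴ * (A n * P)) atTop (nhds ((A' * P)ᴴ * (A' * P))) :=
    (hGcont.tendsto A').comp hA
  have hInvAt : ContinuousAt Inv.inv ((A' * P)ᴴ * (A' * P)) := by
    refine continuousAt_matrix_inv _ ?_
    rw [Ring.inverse_eq_inv']
    exact continuousAt_inv₀ hGdet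
  have hGinv : Tendsto (fun n => ((A n * P)ᴴ * (A n * P))⁻¹) atTop
      (nhds (((A' * P)ᴴ * (A' * P))⁻¹)) := Filter.Tendsto.comp hInvAt hGt
  have hbt : Tendsto (fun n => (A n * P)ᴴ *ᵥ (A n *ᵥ x)) atTop (nhds 0) := by
    have hcontb : Continuous fun X : Matrix (Fin K) (Fin N) ℂ => (X * P)ᴴ *ᵥ (X *ᵥ x) :=
      ((continuous_id.matrix_mul continuous_const).matrix_conjTranspose).matrix_mulVec
        (continuous_id.matrix_mulVec continuous_const)
    have := (hcontb.tendsto A').comp hA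
    simpa [hx, Function.comp_def] using this
  have hct : Tendsto c atTop (nhds 0) := by
    have hmv : Continuous fun p : Matrix (Fin r) (Fin r) ℂ × (Fin r → ℂ) => p.1 *ᵥ p.2 :=
      continuous_fst.matrix_mulVec continuous_snd
    have h5 := (hmv.tendsto ((((A' * P)ᴴ * (A' * P))⁻¹), 0)).comp (hGinv.prodMk_nhds hbt)
    have h6 : Tendsto c atTop (nhds ((((A' * P)ᴴ * (A' * P))⁻¹) *ᵥ 0)) := h5
    simpa only [Matrix.mulVec_zero] using h6
  have hxit : Tendsto (fun n => x - P *ᵥ c n) atTop (nhds x) := by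
    have hPv : Continuous fun v : Fin r → ℂ => P *ᵥ v :=
      continuous_const.matrix_mulVec continuous_id
    have h2 : Tendsto (fun n => P *ᵥ c n) atTop (nhds 0) := by
      have := (hPv.tendsto 0).comp hct
      simpa [Function.comp_def] using this
    have h3 : Tendsto (fun n => x - P *ᵥ c n) atTop (nhds (x - 0)) :=
      tendsto_const_nhds.sub h2
    simpa using h3
  have hmemU : ∀ᶠ n in atTop, x - P *ᵥ c n ∈ U := hxit hU
  have hdetc : Tendsto (fun n => ((A n * P)ᴴ * (A n * P)).det) atTop
      (nhds ((A' * P)ᴴ * (A' * P)).det) :=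
    ((continuous_id.matrix_det).tendsto _).comp hGt
  have hdetne : ∀ᶠ n in atTop, ((A n * P)ᴴ * (A n * P)).det ≠ 0 := hdetc.eventually_ne hGdet
  filter_upwards [hmemU, hdetne] with n hmem hdet
  refine ⟨x - P *ᵥ c n, hmem, ?_⟩
  -- now the exact algebra for a fixed n
  set B : Matrix (Fin K) (Fin r) ℂ := A n * P with hB
  set G : Matrix (Fin r) (Fin r) ℂ := Bᴴ * B with hG
  have hdetG : G.det ≠ 0 := hdet
  have hGinj := injective_of_det_ne_zero G hdetG
  have hBinj0 : ∀ v, B *ᵥ v = 0 → v = 0 := by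
    intro v hv
    refine hGinj v ?_
    rw [hG, ← Matrix.mulVec_mulVec, hv, Matrix.mulVec_zero]
  -- `Bᴴ *ᵥ (B *ᵥ c n) = Bᴴ *ᵥ (A n *ᵥ x)`
  have hnormal : Bᴴ *ᵥ (B *ᵥ c n) = Bᴴ *ᵥ (A n *ᵥ x) := by
    rw [Matrix.mulVec_mulVec, hc]
    show (Bᴴ * B) *ᵥ (G⁻¹ *ᵥ (Bᴴ *ᵥ (A n *ᵥ x))) = _
    rw [← hG, Matrix.mulVec_mulVec, Matrix.mul_nonsing_inv _ (isUnit_iff_ne_zero.2 hdetG),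
      Matrix.one_mulVec]
  -- ranges agree by a dimension count
  have hkerB : LinearMap.ker B.mulVecLin = ⊥ := by
    rw [Submodule.eq_bot_iff]
    intro v hv
    exact hBinj0 v hv
  have hrangeB : finrank ℂ (LinearMap.range B.mulVecLin) = r := by
    have := B.mulVecLin.finrank_range_add_finrank_ker
    rw [hkerB, finrank_bot, Module.finrank_fin_fun] at this
    omega
  have hfinW : finrank ℂ (LinearMap.ker A'.mulVecLin) + r = N := by
    have := Submodule.finrank_add_eq_of_isCompl hW
    rwa [Module.finrank_fin_fun] at this
  have hrangeA : finrank ℂ (LinearMap.range (A n).mulVecLin) = r := by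
    have h1 := (A n).mulVecLin.finrank_range_add_finrank_ker
    rw [Module.finrank_fin_fun, hk n] at h1
    omega
  have hle : LinearMap.range B.mulVecLin ≤ LinearMap.range (A n).mulVecLin := by
    rintro y ⟨v, rfl⟩
    exact ⟨P *ᵥ v, by simp [hB, Matrix.mulVecLin_apply, Matrix.mulVec_mulVec]⟩
  have hrange : LinearMap.range B.mulVecLin = LinearMap.range (A n).mulVecLin :=
    Submodule.eq_of_le_of_finrank_eq hle (by rw [hrangeB, hrangeA])
  have hmemρ : A n *ᵥ x - B *ᵥ c n ∈ LinearMap.range B.mulVecLin := by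
    refine sub_mem ?_ ?_
    · rw [hrange]; exact ⟨x, rfl⟩
    · exact ⟨c n, rfl⟩
  obtain ⟨y, hy⟩ := hmemρ
  have hy0 : y = 0 := by
    refine hGinj y ?_
    have h2 : Bᴴ *ᵥ (B *ᵥ y) = 0 := by
      rw [Matrix.mulVecLin_apply] at hy
      rw [hy, Matrix.mulVec_sub, hnormal, sub_self]
    rwa [Matrix.mulVec_mulVec] at h2
  have hρ : A n *ᵥ x - B *ᵥ c n = 0 := by
    rw [← hy, hy0]
    simp
  rw [Matrix.mulVec_sub, Matrix.mulVec_mulVec, ← hB, hρ]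

end Key

/-- The intertwining condition as a linear map, whose kernel is `homSpace s t d B M`. -/
noncomputable def interMapAux {I Ω : Type*} [Fintype I] [Fintype Ω] (s t : Ω → I) (d : I → ℕ)
    (B M : ∀ h : Ω, Matrix (Fin (d (t h))) (Fin (d (s h))) ℂ) :
    (∀ i : I, Matrix (Fin (d i)) (Fin (d i)) ℂ) →ₗ[ℂ]
      (∀ h : Ω, Matrix (Fin (d (t h))) (Fin (d (s h))) ℂ) where
  toFun f := fun h => f (t h) * B h - M h * f (s h)
  map_add' f g := by
    funext h
    simp only [Pi.add_apply, Matrix.add_mul, Matrix.mul_add]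
    abel
  map_smul' c f := by
    funext h
    simp only [Pi.smul_apply, Matrix.smul_mul, Matrix.mul_smul, RingHom.id_apply, smul_sub]

lemma ker_interMapAux {I Ω : Type*} [Fintype I] [Fintype Ω] (s t : Ω → I) (d : I → ℕ)
    (B M : ∀ h : Ω, Matrix (Fin (d (t h))) (Fin (d (s h))) ℂ) :
    LinearMap.ker (interMapAux s t d B M) = homSpace s t d B M := by
  ext f
  constructor
  · intro hf h
    have := congrFun hf h
    simpa [interMapAux, sub_eq_zero] using this
  · intro hf
    funext h
    simpa [interMapAux, sub_eq_zero] using hf h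

/-- Transfer of the kernel condition through `toMatrix`. -/
lemma mulVec_toMatrix_eq_zero_iff {V W : Type*} [AddCommGroup V] [Module ℂ V]
    [AddCommGroup W] [Module ℂ W] {ι κ : Type*} [Fintype ι] [Fintype κ] [DecidableEq ι]
    (bV : Basis ι ℂ V) (bW : Basis κ ℂ W) (φ : V →ₗ[ℂ] W) (v : ι → ℂ) :
    (LinearMap.toMatrix bV bW φ) *ᵥ v = 0 ↔ φ (bV.equivFun.symm v) = 0 := by
  have hv : v = ⇑(bV.repr (bV.equivFun.symm v)) := by
    funext i
    rw [← Basis.equivFun_apply, LinearEquiv.apply_symm_apply]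
  rw [hv, LinearMap.toMatrix_mulVec_repr, Finsupp.coe_eq_zero, LinearEquiv.map_eq_zero_iff, ← hv]

/-- if `Z n → M` and `dim Hom(Z n, M) = dim Hom(M, M)` for all `n`, then
for all sufficiently large `n` the representation `Z n` is isomorphic to `M`. -/
theorem eventually_iso_of_finrank_hom_eq
    {I Ω : Type*} [Fintype I] [Fintype Ω] (s t : Ω → I) (d : I → ℕ)
    (Z : ℕ → ∀ h : Ω, Matrix (Fin (d (t h))) (Fin (d (s h))) ℂ)
    (M : ∀ h : Ω, Matrix (Fin (d (t h))) (Fin (d (s h))) ℂ)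
    (hZ : Tendsto Z atTop (nhds M))
    (hdim : ∀ n, Module.finrank ℂ (homSpace s t d (Z n) M) =
      Module.finrank ℂ (homSpace s t d M M)) :
    ∀ᶠ n in atTop, ∃ f ∈ homSpace s t d (Z n) M, ∀ i : I, IsUnit (f i) := by
  classical
  let bV := Module.finBasis ℂ (∀ i : I, Matrix (Fin (d i)) (Fin (d i)) ℂ)
  let bW := Module.finBasis ℂ (∀ h : Ω, Matrix (Fin (d (t h))) (Fin (d (s h))) ℂ)
  set N := finrank ℂ (∀ i : I, Matrix (Fin (d i)) (Fin (d i)) ℂ) with hN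
  set K := finrank ℂ (∀ h : Ω, Matrix (Fin (d (t h))) (Fin (d (s h))) ℂ) with hK
  let A : ℕ → Matrix (Fin K) (Fin N) ℂ :=
    fun n => LinearMap.toMatrix bV bW (interMapAux s t d (Z n) M)
  let A' : Matrix (Fin K) (Fin N) ℂ := LinearMap.toMatrix bV bW (interMapAux s t d M M)
  -- continuity of the matrix of the intertwining map
  have hΦ : Continuous fun X : ∀ h : Ω, Matrix (Fin (d (t h))) (Fin (d (s h))) ℂ =>
      LinearMap.toMatrix bV bW (interMapAux s t d X M) := by
    apply continuous_matrix
    intro k l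
    have h0 : Continuous fun X : ∀ h : Ω, Matrix (Fin (d (t h))) (Fin (d (s h))) ℂ =>
        interMapAux s t d X M (bV l) := by
      apply continuous_pi
      intro h
      exact (Continuous.matrix_mul continuous_const (continuous_apply h)).sub continuous_const
    have h1 : Continuous (bW.equivFun : (∀ h : Ω, Matrix (Fin (d (t h))) (Fin (d (s h))) ℂ)
        → (Fin K → ℂ)) := bW.equivFun.toLinearMap.continuous_of_finiteDimensional
    have h3 := (continuous_apply k).comp (h1.comp h0)
    have heq : (fun X : ∀ h : Ω, Matrix (Fin (d (t h))) (Fin (d (s h))) ℂ =>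
        (LinearMap.toMatrix bV bW (interMapAux s t d X M)) k l)
        = fun X => bW.equivFun (interMapAux s t d X M (bV l)) k := by
      funext X
      rw [LinearMap.toMatrix_apply, Basis.equivFun_apply]
    rw [heq]
    exact h3
  have hA : Tendsto A atTop (nhds A') := (hΦ.tendsto M).comp hZ
  have hkermap : ∀ B, LinearMap.ker (LinearMap.toMatrix bV bW (interMapAux s t d B M)).mulVecLin
      = Submodule.map (bV.equivFun : (∀ i : I, Matrix (Fin (d i)) (Fin (d i)) ℂ) →ₗ[ℂ]
          (Fin N → ℂ)) (homSpace s t d B M) := by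
    intro B
    ext v
    rw [LinearMap.mem_ker, Matrix.mulVecLin_apply, mulVec_toMatrix_eq_zero_iff,
      Submodule.mem_map_equiv, ← ker_interMapAux s t d B M, LinearMap.mem_ker]
  have hk : ∀ n, finrank ℂ (LinearMap.ker (A n).mulVecLin)
      = finrank ℂ (LinearMap.ker A'.mulVecLin) := by
    intro n
    show finrank ℂ (LinearMap.ker (LinearMap.toMatrix bV bW
        (interMapAux s t d (Z n) M)).mulVecLin) = _
    rw [hkermap, hkermap, LinearEquiv.finrank_map_eq, LinearEquiv.finrank_map_eq]
    exact hdim n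
  have hone : interMapAux s t d M M (fun _ => 1) = 0 := by
    funext h
    simp [interMapAux]
  have hx : A' *ᵥ (bV.equivFun fun _ => 1) = 0 := by
    rw [mulVec_toMatrix_eq_zero_iff, LinearEquiv.symm_apply_apply]
    exact hone
  have hOopen : IsOpen {f : ∀ i : I, Matrix (Fin (d i)) (Fin (d i)) ℂ | ∀ i, IsUnit (f i)} := by
    have heq : {f : ∀ i : I, Matrix (Fin (d i)) (Fin (d i)) ℂ | ∀ i, IsUnit (f i)}
        = ⋂ i, {f : ∀ i : I, Matrix (Fin (d i)) (Fin (d i)) ℂ | (f i).det ≠ 0} := by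
      ext f
      simp [Matrix.isUnit_iff_isUnit_det, isUnit_iff_ne_zero]
    rw [heq]
    refine isOpen_iInter_of_finite fun i => ?_
    exact isOpen_ne.preimage ((continuous_apply i).matrix_det)
  have hg : Continuous (bV.equivFun.symm : (Fin N → ℂ)
      → (∀ i : I, Matrix (Fin (d i)) (Fin (d i)) ℂ)) :=
    bV.equivFun.symm.toLinearMap.continuous_of_finiteDimensional
  have hUnhds : (⇑bV.equivFun.symm) ⁻¹'
      {f : ∀ i : I, Matrix (Fin (d i)) (Fin (d i)) ℂ | ∀ i, IsUnit (f i)}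
      ∈ nhds (bV.equivFun fun _ => 1) := by
    apply hg.continuousAt.preimage_mem_nhds
    rw [LinearEquiv.symm_apply_apply]
    exact hOopen.mem_nhds (fun i => isUnit_one)
  have hfinal := key A A' hA hk _ hx hUnhds
  filter_upwards [hfinal] with n hn
  obtain ⟨ξ, hξU, hξ0⟩ := hn
  refine ⟨bV.equivFun.symm ξ, ?_, hξU⟩
  have hmem := (mulVec_toMatrix_eq_zero_iff bV bW (interMapAux s t d (Z n) M) ξ).1 hξ0
  rw [← ker_interMapAux s t d (Z n) M]
  exact hmem
end
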